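/- Let 𝓗 be a complex Hilbert space and H ⊆ 𝓗 a standard subspace. Then the symplectic complement H' := {ψ ∈ 𝓗 : Im⟨ψ, h⟩ = 0 for all h ∈ H} is again a standard subspace of 𝓗. -/

import Mathlib

open scoped ComplexInnerProductSpace in
/-- A standard subspace of a complex Hilbert space `𝓗`: a closed real-linear subspace `H`
such that `H + iH` is dense and `H ∩ iH = {0}`. -/
def IsStandardSubspace {𝓗 : Type*} [NormedAddCommGroup 𝓗] [InnerProductSpace ℂ 𝓗]
    [CompleteSpace 𝓗] (H : Submodule ℝ 𝓗) : Prop :=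
  IsClosed (H : Set 𝓗) ∧
    Dense {x : 𝓗 | ∃ h₁ ∈ H, ∃ h₂ ∈ H, x = h₁ + Complex.I • h₂} ∧
    ∀ x ∈ H, (∃ h ∈ H, x = Complex.I • h) → x = 0

/-- The symplectic complement `H' = {ψ : Im⟪ψ, h⟫ = 0 for all h ∈ H}` of a real subspace `H`
of a complex Hilbert space. -/
def symplecticComplement {𝓗 : Type*} [NormedAddCommGroup 𝓗] [InnerProductSpace ℂ 𝓗]
    (H : Submodule ℝ 𝓗) : Submodule ℝ 𝓗 where
  carrier := {ψ : 𝓗 | ∀ h ∈ H, (inner ℂ ψ h : ℂ).im = 0}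
  add_mem' := by
    intro a b ha hb h hh
    rw [inner_add_left]
    simp [ha h hh, hb h hh]
  zero_mem' := by
    intro h hh
    simp
  smul_mem' := by
    intro c x hx h hh
    rw [show (c : ℝ) • x = (c : ℂ) • x by simp [Complex.coe_smul], inner_smul_left]
    simp [hx h hh]

section Aux

variable {𝓗 : Type*} [NormedAddCommGroup 𝓗] [InnerProductSpace ℂ 𝓗]

attribute [local instance] InnerProductSpace.complexToReal

lemma real_inner_def' (x y : 𝓗) : (inner ℝ x y : ℝ) = (inner ℂ x y : ℂ).re := rfl

lemma mem_sympCompl {H : Submodule ℝ 𝓗} {ψ : 𝓗} :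
    ψ ∈ symplecticComplement H ↔ ∀ h ∈ H, (inner ℂ ψ h : ℂ).im = 0 := Iff.rfl

lemma inner_I_smul_left_re (ψ x : 𝓗) :
    ((inner ℂ (Complex.I • ψ) x : ℂ)).re = (inner ℂ ψ x : ℂ).im := by
  rw [inner_smul_left]
  simp

lemma inner_I_smul_left_im (ψ x : 𝓗) :
    ((inner ℂ (Complex.I • ψ) x : ℂ)).im = -(inner ℂ ψ x : ℂ).re := by
  rw [inner_smul_left]
  simp

lemma inner_im_symm' (x y : 𝓗) : (inner ℂ x y : ℂ).im = -(inner ℂ y x : ℂ).im := by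
  have h := inner_conj_symm (𝕜 := ℂ) x y
  rw [← h, Complex.conj_im]

lemma inner_re_symm' (x y : 𝓗) : (inner ℂ x y : ℂ).re = (inner ℂ y x : ℂ).re := by
  have h := inner_conj_symm (𝕜 := ℂ) x y
  rw [← h, Complex.conj_re]

/-- The bipolar theorem for the symplectic complement: for a closed real subspace `H`,
the double symplectic complement equals `H`. -/
lemma sympCompl_sympCompl [CompleteSpace 𝓗] {H : Submodule ℝ 𝓗}
    (hH : IsClosed (H : Set 𝓗)) :
    symplecticComplement (symplecticComplement H) = H := by
  apply le_antisymm
  · intro z hz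
    have key : z ∈ Hᗮᗮ := by
      rw [Submodule.mem_orthogonal]
      intro w hw
      have hIw : Complex.I • w ∈ symplecticComplement H := by
        intro h hh
        rw [inner_I_smul_left_im]
        have := Submodule.inner_left_of_mem_orthogonal hh hw
        rw [real_inner_def'] at this
        rw [this, neg_zero]
      have h1 : (inner ℂ z (Complex.I • w) : ℂ).im = 0 := hz _ hIw
      rw [inner_smul_right] at h1
      simp only [Complex.mul_im, Complex.I_re, Complex.I_im, zero_mul, one_mul,
        zero_add] at h1
      rw [real_inner_def', inner_re_symm', h1]
    rwa [Submodule.orthogonal_orthogonal_eq_closure,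
      hH.submodule_topologicalClosure_eq] at key
  · intro h hh ψ hψ
    rw [inner_im_symm', hψ h hh, neg_zero]

/-- Multiplication by `I` as a real-linear map. -/
def mulI (𝓗 : Type*) [NormedAddCommGroup 𝓗] [InnerProductSpace ℂ 𝓗] : 𝓗 →ₗ[ℝ] 𝓗 where
  toFun x := Complex.I • x
  map_add' := smul_add _
  map_smul' r x := (smul_comm (r : ℝ) (Complex.I) x).symm

end Aux

/-- the symplectic complement of a standard subspace is a standard subspace. -/
theorem isStandardSubspace_symplecticComplement
    {𝓗 : Type*} [NormedAddCommGroup 𝓗] [InnerProductSpace ℂ 𝓗] [CompleteSpace 𝓗]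
    (H : Submodule ℝ 𝓗) (hH : IsStandardSubspace H) :
    IsStandardSubspace (symplecticComplement H) := by
  letI : InnerProductSpace ℝ 𝓗 := InnerProductSpace.complexToReal
  obtain ⟨hcl, hdense, hcap⟩ := hH
  refine ⟨?_, ?_, ?_⟩
  · -- closedness
    have : (symplecticComplement H : Set 𝓗) =
        ⋂ h ∈ H, {ψ : 𝓗 | (inner ℂ ψ h : ℂ).im = 0} := by
      ext ψ
      simp only [Set.mem_iInter, Set.mem_setOf_eq, SetLike.mem_coe, mem_sympCompl]
    rw [this]
    refine isClosed_biInter fun h _ => ?_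
    exact isClosed_eq (Complex.continuous_im.comp
      (Continuous.inner continuous_id continuous_const)) continuous_const
  · -- density
    set K : Submodule ℝ 𝓗 :=
      symplecticComplement H ⊔ (symplecticComplement H).map (mulI 𝓗) with hK
    have hset : {x : 𝓗 | ∃ h₁ ∈ symplecticComplement H, ∃ h₂ ∈ symplecticComplement H,
        x = h₁ + Complex.I • h₂} = (K : Set 𝓗) := by
      ext x
      constructor
      · rintro ⟨h₁, hh₁, h₂, hh₂, rfl⟩
        exact Submodule.add_mem_sup hh₁ (Submodule.mem_map_of_mem hh₂)
      · intro hx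
        rcases Submodule.mem_sup.1 hx with ⟨y, hy, z, hz, rfl⟩
        rcases Submodule.mem_map.1 hz with ⟨h₂, hh₂, rfl⟩
        exact ⟨y, hy, h₂, hh₂, rfl⟩
    rw [hset, Submodule.dense_iff_topologicalClosure_eq_top,
      Submodule.topologicalClosure_eq_top_iff, Submodule.eq_bot_iff]
    intro z hz
    rw [Submodule.mem_orthogonal] at hz
    -- for every ψ ∈ H', the complex inner product ⟪ψ, z⟫ vanishes
    have hinner : ∀ ψ ∈ symplecticComplement H, (inner ℂ ψ z : ℂ) = 0 := by
      intro ψ hψ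
      have h1 : (inner ℝ ψ z : ℝ) = 0 := hz ψ (Submodule.mem_sup_left hψ)
      have h2 : (inner ℝ (Complex.I • ψ) z : ℝ) = 0 :=
        hz _ (Submodule.mem_sup_right (Submodule.mem_map_of_mem hψ))
      rw [real_inner_def'] at h1
      rw [real_inner_def', inner_I_smul_left_re] at h2
      exact Complex.ext h1 h2
    have hzH : z ∈ H := by
      rw [← sympCompl_sympCompl hcl]
      intro ψ hψ
      rw [inner_im_symm', (hinner ψ hψ)]
      simp
    have hIzH : Complex.I • z ∈ H := by
      rw [← sympCompl_sympCompl hcl]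
      intro ψ hψ
      rw [inner_I_smul_left_im, inner_re_symm', hinner ψ hψ]
      simp
    have := hcap _ hIzH ⟨z, hzH, rfl⟩
    rcases smul_eq_zero.1 this with h | h
    · exact absurd h Complex.I_ne_zero
    · exact h
  · -- H' ∩ iH' = {0}
    rintro x hx ⟨h, hh, rfl⟩
    have horto : ∀ y ∈ H, (inner ℂ (Complex.I • h) y : ℂ) = 0 := by
      intro y hy
      refine Complex.ext ?_ (hx y hy)
      rw [inner_I_smul_left_re, hh y hy, Complex.zero_re]
    have hfun : (fun y : 𝓗 => (inner ℂ (Complex.I • h) y : ℂ)) = fun _ => 0 := by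
      refine Continuous.ext_on hdense
        (Continuous.inner continuous_const continuous_id) continuous_const ?_
      rintro y ⟨h₁, hh₁, h₂, hh₂, rfl⟩
      simp only [inner_add_right, inner_smul_right, horto h₁ hh₁, horto h₂ hh₂,
        mul_zero, add_zero]
    have := congrFun hfun (Complex.I • h)
    rwa [inner_self_eq_zero] at this
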